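/- Let V be a finitely generated H-module and C a conformal subalgebra of Cend V, and write C̃ = F(A(C)). Then C is a two-sided ideal of C̃ (i.e., C̃∘_ωC ⊆ C and C∘_ωC̃ ⊆ C), and moreover C̃∘_ωC̃ ⊆ C. -/

import Mathlib

open Polynomial

section Base

variable (k : Type) [Field k]
variable (V : Type) [AddCommGroup V] [Module k V] [Module (Polynomial k) V]
  [IsScalarTower k (Polynomial k) V]

/-- The action of `D` (that is, of the polynomial variable `X ∈ H = k[D]`) on `V`,
as a `k`-linear endomorphism. -/
noncomputable def Tact : Module.End k V where
  toFun u := (X : Polynomial k) • u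
  map_add' u v := smul_add _ _ _
  map_smul' c u := by
    simp only [RingHom.id_apply]
    rw [← algebraMap_smul (Polynomial k) c u,
      ← algebraMap_smul (Polynomial k) c ((X : Polynomial k) • u),
      smul_smul, smul_smul, mul_comm]

/-- Sequences of `k`-linear endomorphisms of `V`; conformal endomorphisms are such sequences. -/
abbrev CSeq := ℕ → Module.End k V

/-- `a` is a conformal endomorphism of `V`: locality (for each `u`, `a n u = 0` for `n` large)
and translation invariance `a n ∘ T - T ∘ a n = n • a (n-1)` (with `a (-1) := 0`;
note that for `n = 0` the right-hand side vanishes because of the scalar `(0 : k)`). -/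
def IsCEnd (a : CSeq k V) : Prop :=
  (∀ u : V, ∃ N : ℕ, ∀ n ≥ N, a n u = 0) ∧
  (∀ n : ℕ, a n * Tact k V - Tact k V * a n = (n : k) • a (n - 1))

/-- The action of `D` on conformal endomorphisms: `(D a)(n) = -n • a(n-1)`. -/
noncomputable def cD (a : CSeq k V) : CSeq k V := fun n => -((n : k) • a (n - 1))

/-- The `n`-th conformal product `(a ∘ₙ b)(m) = ∑_{s=0}^n (-1)^s C(n,s) a(n-s) b(m+s)`. -/
noncomputable def comul (n : ℕ) (a b : CSeq k V) : CSeq k V :=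
  fun m => ∑ s ∈ Finset.range (n + 1),
    (((-1 : k) ^ s) * (n.choose s : k)) • (a (n - s) * b (m + s))

/-- The action of a polynomial `p ∈ H = k[D]` on conformal endomorphisms (via `cD`). -/
noncomputable def hsmul (p : Polynomial k) (a : CSeq k V) : CSeq k V :=
  p.sum fun s c => c • (cD k V)^[s] a

/-- `{a ∘ₙ b} = ∑_{s ≥ 0} ((-1)^{n+s}/s!) Dˢ (a ∘_{n+s} b)`, evaluated pointwise
(the sum is pointwise finite). -/
noncomputable def cbrace (n : ℕ) (a b : CSeq k V) : CSeq k V :=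
  fun m => ∑ᶠ s : ℕ,
    (((-1 : k) ^ (n + s)) * ((s.factorial : k))⁻¹) • ((cD k V)^[s] (comul k V (n + s) a b)) m

/-- For `C ⊆ Cend V`, the set `A(C) = {a(n) : a ∈ C, n ∈ ℕ} ⊆ End_k V`. -/
def setA (C : Set (CSeq k V)) : Set (Module.End k V) :=
  {x | ∃ a ∈ C, ∃ n : ℕ, a n = x}

/-- For `S ⊆ End_k V`, the set `F(S) = {a ∈ Cend V : a(n) ∈ S for all n}`. -/
def setF (S : Set (Module.End k V)) : Set (CSeq k V) :=
  {a | IsCEnd k V a ∧ ∀ n : ℕ, a n ∈ S}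

/-- `C` is a conformal subalgebra of `Cend V`: a set of conformal endomorphisms which is
an `H`-submodule (closed under addition, `k`-scalars and the action of `D`)
closed under all `n`-th products. -/
structure IsConfSubalgebra (C : Set (CSeq k V)) : Prop where
  isCEnd : ∀ a ∈ C, IsCEnd k V a
  zero_mem : (0 : CSeq k V) ∈ C
  add_mem : ∀ a ∈ C, ∀ b ∈ C, a + b ∈ C
  smul_mem : ∀ (r : k), ∀ a ∈ C, r • a ∈ C
  cD_mem : ∀ a ∈ C, cD k V a ∈ C
  comul_mem : ∀ a ∈ C, ∀ b ∈ C, ∀ n : ℕ, comul k V n a b ∈ C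

/-- The `k`-span `A ∘_ω B` of all products `a ∘ₙ b`, `a ∈ A`, `b ∈ B`, `n ∈ ℕ`. -/
def omegaMulSet (A B : Set (CSeq k V)) : Set (CSeq k V) :=
  (Submodule.span k {y | ∃ a ∈ A, ∃ b ∈ B, ∃ n : ℕ, y = comul k V n a b} : Submodule k (CSeq k V))

/-- Powers `I⁽¹⁾ = I`, `I⁽ᵐ⁺¹⁾ = I⁽ᵐ⁾ ∘_ω I`. -/
def idealPowSeq (I : Set (CSeq k V)) : ℕ → Set (CSeq k V)
  | 0 => I
  | m + 1 => omegaMulSet k V (idealPowSeq I m) I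

/-- The sequence of powers of `I` is eventually zero. -/
def IsNilpotentSeqSet (I : Set (CSeq k V)) : Prop :=
  ∃ m : ℕ, ∀ m' ≥ m, idealPowSeq k V I m' ⊆ {0}

/-- `I` is an ideal of the conformal subalgebra `C ⊆ Cend V`. -/
structure IsConfIdealOf (C I : Set (CSeq k V)) : Prop where
  subset : I ⊆ C
  zero_mem : (0 : CSeq k V) ∈ I
  add_mem : ∀ a ∈ I, ∀ b ∈ I, a + b ∈ I
  smul_mem : ∀ (r : k), ∀ a ∈ I, r • a ∈ I
  cD_mem : ∀ a ∈ I, cD k V a ∈ I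
  comul_mem_left : ∀ a ∈ C, ∀ b ∈ I, ∀ n : ℕ, comul k V n a b ∈ I
  comul_mem_right : ∀ a ∈ C, ∀ b ∈ I, ∀ n : ℕ, comul k V n b a ∈ I

end Base
section Aux

open Finset

variable (k : Type) [Field k] [CharZero k]
variable (V : Type) [AddCommGroup V] [Module k V] [Module (Polynomial k) V]
  [IsScalarTower k (Polynomial k) V]

/-- Translation invariance (second half of `IsCEnd`). -/
def TI (a : CSeq k V) : Prop :=
  ∀ n : ℕ, a n * Tact k V - Tact k V * a n = (n : k) • a (n - 1)

/-- The commutator with `T`. -/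
noncomputable def Kc (x : Module.End k V) : Module.End k V :=
  x * Tact k V - Tact k V * x

/-- Generalized `comul`-type sum. -/
noncomputable def cmG (G : ℕ → ℕ → Module.End k V) (n : ℕ) : CSeq k V :=
  fun m => ∑ s ∈ Finset.range (n + 1),
    (((-1 : k) ^ s) * (n.choose s : k)) • G (n - s) (m + s)

lemma comul_eq_cmG (a b : CSeq k V) (n : ℕ) :
    comul k V n a b = cmG k V (fun i j => a i * b j) n := rfl

/-- The "brace" product. -/
noncomputable def br (a b : CSeq k V) (q : ℕ) : CSeq k V :=
  cmG k V (fun i j => a j * b i) q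

lemma cD_iter (f : CSeq k V) (s m : ℕ) :
    (cD k V)^[s] f m = (((-1 : k) ^ s) * (m.descFactorial s : k)) • f (m - s) := by
  induction s generalizing m with
  | zero => simp
  | succ s ih =>
    rw [Function.iterate_succ_apply']
    show -((m : k) • (cD k V)^[s] f (m - 1)) = _
    rw [ih]
    cases m with
    | zero => simp
    | succ m =>
      rw [Nat.succ_sub_one, smul_smul, Nat.succ_descFactorial_succ,
        show m + 1 - (s + 1) = m - s by omega]
      rw [← neg_smul]
      congr 1
      push_cast
      ring

lemma cD_iter_zero (s : ℕ) : (cD k V)^[s] (0 : CSeq k V) = 0 := by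
  induction s with
  | zero => rfl
  | succ s ih =>
    rw [Function.iterate_succ_apply, show cD k V 0 = 0 from ?_, ih]
    funext m
    simp [cD]

lemma Kc_iter (a : CSeq k V) (ha : TI k V a) (n s : ℕ) :
    (Kc k V)^[s] (a n) = ((n.descFactorial s : k)) • a (n - s) := by
  induction s with
  | zero => simp
  | succ s ih =>
    rw [Function.iterate_succ_apply', ih]
    show ((n.descFactorial s : k) • a (n - s)) * Tact k V
        - Tact k V * ((n.descFactorial s : k) • a (n - s)) = _
    rw [smul_mul_assoc, mul_smul_comm, ← smul_sub, ha (n - s), smul_smul,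
      Nat.descFactorial_succ, show n - s - 1 = n - (s + 1) by omega]
    congr 1
    push_cast
    ring

lemma factorial_cast_ne_zero (s : ℕ) : (s.factorial : k) ≠ 0 :=
  Nat.cast_ne_zero.mpr (Nat.factorial_ne_zero s)

/-- `comul n a b` in terms of `Kc`-iterates of the single coefficient `a n`. -/
lemma comul_collapse (a b : CSeq k V) (ha : TI k V a) {n Q : ℕ} (hQ : n ≤ Q) (m : ℕ) :
    comul k V n a b m
      = ∑ s ∈ Finset.range (Q + 1),
          (((-1 : k) ^ s) * ((s.factorial : k))⁻¹) • ((Kc k V)^[s] (a n) * b (m + s)) := by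
  have hterm : ∀ s : ℕ,
      (((-1 : k) ^ s) * ((s.factorial : k))⁻¹) • ((Kc k V)^[s] (a n) * b (m + s))
        = (((-1 : k) ^ s) * (n.choose s : k)) • (a (n - s) * b (m + s)) := by
    intro s
    rw [Kc_iter k V a ha, smul_mul_assoc, smul_smul, Nat.descFactorial_eq_factorial_mul_choose]
    congr 1
    push_cast
    field_simp [factorial_cast_ne_zero]
    rw [mul_div_cancel_left₀ _ (factorial_cast_ne_zero k _)]
  rw [Finset.sum_congr rfl (fun s _ => hterm s)]
  rw [show comul k V n a b m = ∑ s ∈ Finset.range (n + 1),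
      (((-1 : k) ^ s) * (n.choose s : k)) • (a (n - s) * b (m + s)) from rfl]
  apply Finset.sum_subset
  · exact Finset.range_subset_range.mpr (by omega)
  · intro s hs hns
    rw [Finset.mem_range] at hns
    rw [Nat.choose_eq_zero_of_lt (by omega : n < s)]
    simp

lemma comul_eq_of_coeff_eq (a c b : CSeq k V) (ha : TI k V a) (hc : TI k V c)
    (n N : ℕ) (h : a n = c N) : comul k V n a b = comul k V N c b := by
  funext m
  rw [comul_collapse k V a b ha (le_max_left n N) m,
    comul_collapse k V c b hc (le_max_right n N) m, h]

/-- `br a b q` in terms of `Kc`-iterates of the single coefficient `b q`. -/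
lemma br_collapse (a b : CSeq k V) (hb : TI k V b) {q Q : ℕ} (hQ : q ≤ Q) (m : ℕ) :
    br k V a b q m
      = ∑ t ∈ Finset.range (Q + 1),
          (((-1 : k) ^ t) * ((t.factorial : k))⁻¹) • (a (m + t) * (Kc k V)^[t] (b q)) := by
  have hterm : ∀ t : ℕ,
      (((-1 : k) ^ t) * ((t.factorial : k))⁻¹) • (a (m + t) * (Kc k V)^[t] (b q))
        = (((-1 : k) ^ t) * (q.choose t : k)) • (a (m + t) * b (q - t)) := by
    intro t
    rw [Kc_iter k V b hb, mul_smul_comm, smul_smul, Nat.descFactorial_eq_factorial_mul_choose]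
    congr 1
    push_cast
    field_simp [factorial_cast_ne_zero]
    rw [mul_div_cancel_left₀ _ (factorial_cast_ne_zero k _)]
  rw [Finset.sum_congr rfl (fun t _ => hterm t)]
  rw [show br k V a b q m = ∑ t ∈ Finset.range (q + 1),
      (((-1 : k) ^ t) * (q.choose t : k)) • (a (m + t) * b (q - t)) from rfl]
  apply Finset.sum_subset
  · exact Finset.range_subset_range.mpr (by omega)
  · intro t ht hnt
    rw [Finset.mem_range] at hnt
    rw [Nat.choose_eq_zero_of_lt (by omega : q < t)]
    simp

lemma br_eq_of_coeff_eq (a b d : CSeq k V) (hb : TI k V b) (hd : TI k V d)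
    (q M : ℕ) (h : b q = d M) : br k V a b q = br k V a d M := by
  funext m
  rw [br_collapse k V a b hb (le_max_left q M) m,
    br_collapse k V a d hd (le_max_right q M) m, h]

end Aux
section Aux2

open Finset

variable (k : Type) [Field k] [CharZero k]
variable (V : Type) [AddCommGroup V] [Module k V] [Module (Polynomial k) V]
  [IsScalarTower k (Polynomial k) V]

set_option linter.unusedSectionVars false

/-- The master combinatorial lemma: the brace transform of `cmG G` is `cmG` of the
transposed kernel. -/
lemma CL2 (m : ℕ) : ∀ (q : ℕ) (G : ℕ → ℕ → Module.End k V),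
    ∑ s ∈ Finset.range (m + 1),
        (((-1 : k) ^ q) * (m.choose s : k)) • (cmG k V G (q + s) (m - s))
      = cmG k V (fun i j => G j i) q m := by
  induction m with
  | zero =>
    intro q G
    rw [Finset.range_one, Finset.sum_singleton, Nat.choose_self]
    simp only [Nat.cast_one, mul_one, add_zero, Nat.sub_zero]
    show ((-1 : k) ^ q) • (∑ t ∈ Finset.range (q + 1),
        (((-1 : k) ^ t) * (q.choose t : k)) • G (q - t) (0 + t))
      = ∑ t ∈ Finset.range (q + 1), (((-1 : k) ^ t) * (q.choose t : k)) • G (0 + t) (q - t)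
    rw [Finset.smul_sum]
    conv_rhs => rw [← Finset.sum_range_reflect
      (fun t => (((-1 : k) ^ t) * (q.choose t : k)) • G (0 + t) (q - t)) (q + 1)]
    apply Finset.sum_congr rfl
    intro t ht
    rw [Finset.mem_range] at ht
    have h1 : q + 1 - 1 - t = q - t := by omega
    have h2 : q - (q - t) = t := by omega
    have h3 : 0 + (q - t) = q - t := by omega
    have h4 : (q.choose (q - t) : k) = (q.choose t : k) := by
      rw [Nat.choose_symm (by omega)]
    have h5 : ((-1 : k)) ^ (q - t) = (-1) ^ q * (-1) ^ t := by
      have e1 : ((-1 : k)) ^ (q - t) * (-1) ^ t = (-1) ^ q := by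
        rw [← pow_add, Nat.sub_add_cancel (by omega : t ≤ q)]
      have e2 : ((-1 : k)) ^ t * (-1) ^ t = 1 := by
        rw [← mul_pow]; norm_num
      calc ((-1 : k)) ^ (q - t) = ((-1 : k)) ^ (q - t) * (((-1) ^ t) * ((-1) ^ t)) := by
            rw [e2, mul_one]
        _ = ((-1) ^ q) * (-1) ^ t := by rw [← mul_assoc, e1]
    rw [h1, h2, h3, h4, h5, smul_smul]
    simp only [zero_add]
    congr 1
    ring
  | succ m ih =>
    intro q G
    have pascal : ∀ (x : ℕ → Module.End k V),
        ∑ s ∈ Finset.range (m + 2), (((m + 1).choose s : k)) • x s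
          = (∑ s ∈ Finset.range (m + 1), ((m.choose s : k)) • x s)
            + ∑ s ∈ Finset.range (m + 1), ((m.choose s : k)) • x (s + 1) := by
      intro x
      rw [Finset.sum_range_succ' (fun s => (((m + 1).choose s : k)) • x s) (m + 1)]
      have hterm : ∀ s, (((m + 1).choose (s + 1) : k)) • x (s + 1)
          = ((m.choose s : k)) • x (s + 1) + ((m.choose (s + 1) : k)) • x (s + 1) := by
        intro s
        rw [Nat.choose_succ_succ' m s]
        push_cast
        rw [add_smul]
      rw [Finset.sum_congr rfl (fun s _ => hterm s), Finset.sum_add_distrib]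
      have h0 : (((m + 1).choose 0 : k)) • x 0 = ((m.choose 0 : k)) • x 0 := by norm_num
      rw [h0, add_assoc,
        ← Finset.sum_range_succ' (fun s => ((m.choose s : k)) • x s) (m + 1),
        Finset.sum_range_succ (fun s => ((m.choose s : k)) • x s) (m + 1),
        Nat.choose_succ_self]
      simp only [Nat.cast_zero, zero_smul, add_zero]
      exact add_comm _ _
    have hL : ∑ s ∈ Finset.range (m + 2),
          (((-1 : k) ^ q) * ((m + 1).choose s : k)) • (cmG k V G (q + s) (m + 1 - s))
        = (-1 : k) ^ q • ∑ s ∈ Finset.range (m + 2),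
            (((m + 1).choose s : k)) • (cmG k V G (q + s) (m + 1 - s)) := by
      rw [Finset.smul_sum]
      exact Finset.sum_congr rfl (fun s _ => by rw [smul_smul])
    rw [hL, pascal, smul_add]
    have cmG_shift : ∀ (p r : ℕ),
        cmG k V G p (r + 1) = cmG k V (fun i j => G i (j + 1)) p r := by
      intro p r
      show (∑ t ∈ Finset.range (p + 1), _) = _
      apply Finset.sum_congr rfl
      intro t _
      have : r + 1 + t = r + t + 1 := by omega
      rw [this]
    have hP1 : (-1 : k) ^ q • (∑ s ∈ Finset.range (m + 1),
          ((m.choose s : k)) • cmG k V G (q + s) (m + 1 - s))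
        = cmG k V (fun i j => G j (i + 1)) q m := by
      rw [← ih q (fun i j => G i (j + 1)), Finset.smul_sum]
      apply Finset.sum_congr rfl
      intro s hs
      rw [Finset.mem_range] at hs
      rw [smul_smul]
      congr 1
      rw [show m + 1 - s = (m - s) + 1 by omega, cmG_shift]
    have hP2 : (-1 : k) ^ q • (∑ s ∈ Finset.range (m + 1),
          ((m.choose s : k)) • cmG k V G (q + (s + 1)) (m + 1 - (s + 1)))
        = - cmG k V (fun i j => G j i) (q + 1) m := by
      rw [← ih (q + 1) G, Finset.smul_sum, ← Finset.sum_neg_distrib]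
      apply Finset.sum_congr rfl
      intro s _
      have e1 : q + (s + 1) = (q + 1) + s := by omega
      have e2 : m + 1 - (s + 1) = m - s := by omega
      rw [e1, e2, smul_smul, ← neg_smul]
      congr 1
      rw [pow_succ]
      ring
    rw [hP1, hP2]
    -- final combinatorial identity
    have e1 : cmG k V (fun i j => G j (i + 1)) q m
        = ∑ t ∈ Finset.range (q + 1),
            (((-1 : k) ^ t) * (q.choose t : k)) • G (m + t) (q + 1 - t) := by
      apply Finset.sum_congr rfl
      intro t ht
      rw [Finset.mem_range] at ht
      have : q - t + 1 = q + 1 - t := by omega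
      show (((-1 : k) ^ t) * (q.choose t : k)) • G (m + t) ((q - t) + 1) = _
      rw [this]
    have e2 : cmG k V (fun i j => G j i) (q + 1) m
        = ∑ t ∈ Finset.range (q + 2),
            (((-1 : k) ^ t) * ((q + 1).choose t : k)) • G (m + t) (q + 1 - t) := rfl
    have e4 : ∑ t ∈ Finset.range (q + 1),
          (((-1 : k) ^ t) * (q.choose t : k)) • G (m + t) (q + 1 - t)
        = ∑ t ∈ Finset.range (q + 2),
            (((-1 : k) ^ t) * (q.choose t : k)) • G (m + t) (q + 1 - t) := by
      rw [Finset.sum_range_succ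
        (fun t => (((-1 : k) ^ t) * (q.choose t : k)) • G (m + t) (q + 1 - t)) (q + 1),
        Nat.choose_succ_self]
      simp
    rw [e1, e4, e2, ← sub_eq_add_neg, ← Finset.sum_sub_distrib]
    have e5 : ∀ t, (((-1 : k) ^ t) * (q.choose t : k)) • G (m + t) (q + 1 - t)
          - (((-1 : k) ^ t) * ((q + 1).choose t : k)) • G (m + t) (q + 1 - t)
        = (((-1 : k) ^ t) * ((q.choose t : k) - ((q + 1).choose t : k))) • G (m + t) (q + 1 - t) := by
      intro t
      rw [← sub_smul]
      congr 1
      ring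
    rw [Finset.sum_congr rfl (fun t _ => e5 t), Finset.sum_range_succ' _ (q + 1)]
    have e6 : (((-1 : k) ^ 0) * ((q.choose 0 : k) - ((q + 1).choose 0 : k))) • G (m + 0) (q + 1 - 0)
        = 0 := by simp
    rw [e6, add_zero]
    show _ = ∑ t ∈ Finset.range (q + 1),
        (((-1 : k) ^ t) * (q.choose t : k)) • G (m + 1 + t) (q - t)
    apply Finset.sum_congr rfl
    intro t ht
    have e7 : ((q + 1).choose (t + 1) : k) = (q.choose t : k) + (q.choose (t + 1) : k) := by
      rw [Nat.choose_succ_succ' q t]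
      push_cast
      ring
    have e8 : m + (t + 1) = (m + 1) + t := by omega
    have e9 : q + 1 - (t + 1) = q - t := by omega
    rw [e8, e9, e7]
    congr 1
    rw [pow_succ]
    ring

end Aux2
section Aux3

open Finset

variable (k : Type) [Field k] [CharZero k]
variable (V : Type) [AddCommGroup V] [Module k V] [Module (Polynomial k) V]
  [IsScalarTower k (Polynomial k) V]

set_option linter.unusedSectionVars false

lemma cmG_swap_eq_sum (G : ℕ → ℕ → Module.End k V) (P : ℕ)
    (hP : ∀ p, P ≤ p → cmG k V G p = 0) (q : ℕ) :
    cmG k V (fun i j => G j i) q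
      = ∑ s ∈ Finset.range (P + 1),
          (((-1 : k) ^ (q + s)) * ((s.factorial : k))⁻¹) • ((cD k V)^[s] (cmG k V G (q + s))) := by
  funext m
  rw [← CL2 k V m q G, Finset.sum_apply]
  have hterm : ∀ s, ((((-1 : k) ^ (q + s)) * ((s.factorial : k))⁻¹)
        • ((cD k V)^[s] (cmG k V G (q + s)))) m
      = (((-1 : k) ^ q) * (m.choose s : k)) • (cmG k V G (q + s) (m - s)) := by
    intro s
    rw [Pi.smul_apply, cD_iter, smul_smul, Nat.descFactorial_eq_factorial_mul_choose]
    congr 1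
    push_cast
    rw [pow_add]
    have hsq : ((-1 : k)) ^ s * (-1) ^ s = 1 := by rw [← mul_pow]; norm_num
    have : (-1 : k) ^ q * (-1) ^ s * ((s.factorial : k))⁻¹
          * ((-1) ^ s * ((s.factorial : k) * (m.choose s : k)))
        = ((-1) ^ q * (m.choose s : k))
          * (((-1) ^ s * (-1) ^ s) * (((s.factorial : k))⁻¹ * (s.factorial : k))) := by
      ring
    rw [this, hsq, inv_mul_cancel₀ (factorial_cast_ne_zero k s), mul_one, mul_one]
  rw [Finset.sum_congr rfl (fun s _ => hterm s)]
  set f : ℕ → Module.End k V :=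
    fun s => (((-1 : k) ^ q) * (m.choose s : k)) • (cmG k V G (q + s) (m - s)) with hf
  have hvan1 : ∀ s ∈ Finset.range (m + P + 2), s ∉ Finset.range (m + 1) → f s = 0 := by
    intro s _ hs
    rw [Finset.mem_range] at hs
    rw [hf]
    simp only
    rw [Nat.choose_eq_zero_of_lt (by omega : m < s)]
    simp
  have hvan2 : ∀ s ∈ Finset.range (m + P + 2), s ∉ Finset.range (P + 1) → f s = 0 := by
    intro s _ hs
    rw [Finset.mem_range] at hs
    rw [hf]
    simp only
    rw [hP (q + s) (by omega)]
    simp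
  rw [Finset.sum_subset (Finset.range_subset_range.mpr (by omega : m + 1 ≤ m + P + 2)) hvan1,
    ← Finset.sum_subset (Finset.range_subset_range.mpr (by omega : P + 1 ≤ m + P + 2)) hvan2]

lemma cmG_swap_vanish (G : ℕ → ℕ → Module.End k V) (P : ℕ)
    (hP : ∀ p, P ≤ p → cmG k V G p = 0) :
    ∀ q, P ≤ q → cmG k V (fun i j => G j i) q = 0 := by
  intro q hq
  rw [cmG_swap_eq_sum k V G P hP q]
  apply Finset.sum_eq_zero
  intro s _
  rw [hP (q + s) (by omega), cD_iter_zero]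
  simp

lemma comm_mul (A B A' B' T : Module.End k V) (α β : k)
    (hA : A * T - T * A = α • A') (hB : B * T - T * B = β • B') :
    (A * B) * T - T * (A * B) = α • (A' * B) + β • (A * B') := by
  have step : (A * B) * T - T * (A * B) = (A * T - T * A) * B + A * (B * T - T * B) := by
    rw [mul_sub, sub_mul]
    simp only [← mul_assoc]
    abel
  rw [step, hA, hB, smul_mul_assoc, mul_smul_comm]

lemma TI_comul (a b : CSeq k V) (ha : TI k V a) (hb : TI k V b) (n : ℕ) :
    TI k V (comul k V n a b) := by
  intro m
  show (∑ s ∈ Finset.range (n + 1), (((-1 : k) ^ s) * (n.choose s : k)) • (a (n - s) * b (m + s)))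
        * Tact k V
      - Tact k V * (∑ s ∈ Finset.range (n + 1),
          (((-1 : k) ^ s) * (n.choose s : k)) • (a (n - s) * b (m + s)))
    = (m : k) • comul k V n a b (m - 1)
  rw [Finset.sum_mul, Finset.mul_sum, ← Finset.sum_sub_distrib]
  have key : ∀ s, ((((-1 : k) ^ s) * (n.choose s : k)) • (a (n - s) * b (m + s))) * Tact k V
      - Tact k V * ((((-1 : k) ^ s) * (n.choose s : k)) • (a (n - s) * b (m + s)))
      = (((-1 : k) ^ s) * (n.choose s : k) * (((n - s : ℕ)) : k)) • (a (n - s - 1) * b (m + s))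
        + (((-1 : k) ^ s) * (n.choose s : k) * (((m + s : ℕ)) : k)) • (a (n - s) * b (m + s - 1)) := by
    intro s
    rw [smul_mul_assoc, mul_smul_comm, ← smul_sub,
      comm_mul k V _ _ _ _ _ _ _ (ha (n - s)) (hb (m + s)), smul_add, smul_smul, smul_smul]
  rw [Finset.sum_congr rfl (fun s _ => key s), Finset.sum_add_distrib]
  have RL : ∑ s ∈ Finset.range (n + 1),
        (((-1 : k) ^ s) * (n.choose s : k) * (((n - s : ℕ)) : k)) • (a (n - s - 1) * b (m + s))
      = ∑ s ∈ Finset.range (n + 1),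
          (-(((-1 : k) ^ s) * (n.choose s : k) * ((s : ℕ) : k))) • (a (n - s) * b (m + s - 1)) := by
    rw [Finset.sum_range_succ, Nat.sub_self]
    simp only [Nat.cast_zero, mul_zero, zero_smul, add_zero]
    rw [Finset.sum_range_succ' (fun s =>
      (-(((-1 : k) ^ s) * (n.choose s : k) * ((s : ℕ) : k))) • (a (n - s) * b (m + s - 1))) n]
    simp only [Nat.cast_zero, mul_zero, neg_zero, zero_smul, add_zero]
    apply Finset.sum_congr rfl
    intro s hs
    rw [Finset.mem_range] at hs
    have hidx1 : n - (s + 1) = n - s - 1 := by omega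
    have hidx2 : m + (s + 1) - 1 = m + s := by omega
    rw [hidx1, hidx2]
    congr 1
    have hch : ((n.choose (s + 1) : ℕ) : k) * ((s + 1 : ℕ) : k)
        = ((n.choose s : ℕ) : k) * (((n - s : ℕ)) : k) := by
      rw [← Nat.cast_mul, ← Nat.cast_mul, Nat.choose_succ_right_eq]
    rw [pow_succ]
    push_cast at hch ⊢
    first
    | linear_combination ((-1 : k) ^ s) * hch
    | linear_combination (-((-1 : k) ^ s)) * hch
  rw [RL, ← Finset.sum_add_distrib]
  have comb : ∀ s, (-(((-1 : k) ^ s) * (n.choose s : k) * ((s : ℕ) : k))) • (a (n - s) * b (m + s - 1))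
      + (((-1 : k) ^ s) * (n.choose s : k) * (((m + s : ℕ)) : k)) • (a (n - s) * b (m + s - 1))
      = ((((-1 : k) ^ s) * (n.choose s : k)) * (m : k)) • (a (n - s) * b (m + s - 1)) := by
    intro s
    rw [← add_smul]
    congr 1
    push_cast
    ring
  rw [Finset.sum_congr rfl (fun s _ => comb s)]
  rcases Nat.eq_zero_or_pos m with hm | hm
  · subst hm
    simp only [Nat.cast_zero, mul_zero, zero_smul]
    exact Finset.sum_eq_zero fun s _ => rfl
  · have hidx : ∀ s, m + s - 1 = m - 1 + s := by intro s; omega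
    rw [Finset.sum_congr rfl (fun s _ => by rw [hidx s])]
    show _ = (m : k) • ∑ s ∈ Finset.range (n + 1),
        (((-1 : k) ^ s) * (n.choose s : k)) • (a (n - s) * b (m - 1 + s))
    rw [Finset.smul_sum]
    apply Finset.sum_congr rfl
    intro s _
    rw [smul_smul]
    congr 1
    ring

end Aux3
section Aux4

open Finset

variable (k : Type) [Field k] [CharZero k]
variable (V : Type) [AddCommGroup V] [Module k V] [Module (Polynomial k) V]
  [IsScalarTower k (Polynomial k) V]

set_option linter.unusedSectionVars false

/-- Locality in `Cend V` for a finitely generated module `V`. -/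
lemma exists_loc_bound [Module.Finite (Polynomial k) V] (a b : CSeq k V)
    (haE : IsCEnd k V a) (hbE : IsCEnd k V b) :
    ∃ P : ℕ, ∀ p, P ≤ p → comul k V p a b = 0 := by
  classical
  obtain ⟨S, hS⟩ := Module.finite_def.mp ‹Module.Finite (Polynomial k) V›
  choose Nb hNb using hbE.1
  choose Na hNa using haE.1
  set NB := S.sup Nb with hNBdef
  set NA := (Finset.range NB ×ˢ S).sup (fun pu => Na (b pu.1 pu.2)) with hNAdef
  refine ⟨NA + NB, ?_⟩
  intro p hp
  have hgen : ∀ u ∈ S, ∀ m, comul k V p a b m u = 0 := by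
    intro u hu m
    show (∑ s ∈ Finset.range (p + 1),
        (((-1 : k) ^ s) * (p.choose s : k)) • (a (p - s) * b (m + s))) u = 0
    rw [LinearMap.sum_apply]
    apply Finset.sum_eq_zero
    intro s hs
    rw [Finset.mem_range] at hs
    rw [LinearMap.smul_apply, Module.End.mul_apply]
    by_cases hcase : m + s < NB
    · have hz : a (p - s) (b (m + s) u) = 0 := by
        apply hNa
        have hle : Na (b (m + s) u) ≤ NA := by
          rw [hNAdef]
          have hmem : ((m + s : ℕ), u) ∈ Finset.range NB ×ˢ S :=
            Finset.mem_product.mpr ⟨Finset.mem_range.mpr hcase, hu⟩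
          exact Finset.le_sup (f := fun pu : ℕ × V => Na (b pu.1 pu.2)) hmem
        omega
      rw [hz, smul_zero]
    · have hb0 : b (m + s) u = 0 := by
        apply hNb
        have h2 : Nb u ≤ NB := Finset.le_sup hu
        omega
      rw [hb0, map_zero, smul_zero]
  have hTIc : TI k V (comul k V p a b) := TI_comul k V a b haE.2 hbE.2 p
  have hX : ∀ v : V, (∀ m', comul k V p a b m' v = 0) →
      ∀ m', comul k V p a b m' ((X : Polynomial k) • v) = 0 := by
    intro v hv m'
    have hTv : (X : Polynomial k) • v = Tact k V v := rfl
    rw [hTv]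
    have hc := congrArg (fun f : Module.End k V => f v) (hTIc m')
    simp only [LinearMap.sub_apply, Module.End.mul_apply, LinearMap.smul_apply] at hc
    rw [hv m', map_zero, sub_zero, hv (m' - 1), smul_zero] at hc
    exact hc
  have hsmul : ∀ (r : Polynomial k) (v : V), (∀ m', comul k V p a b m' v = 0) →
      ∀ m', comul k V p a b m' (r • v) = 0 := by
    intro r
    refine Polynomial.induction_on
      (motive := fun r => ∀ v : V, (∀ m', comul k V p a b m' v = 0) →
        ∀ m', comul k V p a b m' (r • v) = 0) r ?_ ?_ ?_
    · intro c v hv m'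
      have hCc : (Polynomial.C c) • v = c • v := by
        rw [← Polynomial.algebraMap_eq]
        exact algebraMap_smul (Polynomial k) c v
      rw [hCc, map_smul, hv m', smul_zero]
    · intro f g hf hg v hv m'
      rw [add_smul, map_add, hf v hv m', hg v hv m', add_zero]
    · intro n c hmon v hv m'
      have hsplit : (Polynomial.C c * Polynomial.X ^ (n + 1)) • v
          = (Polynomial.C c * Polynomial.X ^ n) • ((X : Polynomial k) • v) := by
        rw [← mul_smul, pow_succ, ← mul_assoc]
      rw [hsplit]
      exact hmon ((X : Polynomial k) • v) (hX v hv) m'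
  let W : Submodule (Polynomial k) V :=
    { carrier := {v | ∀ m', comul k V p a b m' v = 0}
      add_mem' := fun hx hy m' => by rw [map_add, hx m', hy m', add_zero]
      zero_mem' := fun m' => by rw [map_zero]
      smul_mem' := fun r v hv => hsmul r v hv }
  have hallW : ∀ v : V, v ∈ W := by
    intro v
    have htop : (⊤ : Submodule (Polynomial k) V) ≤ W := by
      rw [← hS]
      refine Submodule.span_le.mpr ?_
      intro u hu
      exact fun m => hgen u hu m
    exact htop trivial
  funext m
  apply LinearMap.ext
  intro v
  exact hallW v m

end Aux4

section Glue

open Finset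

variable {k : Type} [Field k] [CharZero k]
variable {V : Type} [AddCommGroup V] [Module k V] [Module (Polynomial k) V]
  [IsScalarTower k (Polynomial k) V] [Module.Finite (Polynomial k) V]
variable {C : Set (CSeq k V)}

set_option linter.unusedSectionVars false

lemma mem_cD_iter (hC : IsConfSubalgebra k V C) {a : CSeq k V} (h : a ∈ C) (s : ℕ) :
    (cD k V)^[s] a ∈ C := by
  induction s with
  | zero => exact h
  | succ s ih =>
    rw [Function.iterate_succ_apply']
    exact hC.cD_mem _ ih

lemma mem_finsum (hC : IsConfSubalgebra k V C) (t : Finset ℕ) (F : ℕ → CSeq k V)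
    (h : ∀ i ∈ t, F i ∈ C) : (∑ i ∈ t, F i) ∈ C :=
  Finset.sum_induction F (· ∈ C) (fun x y hx hy => hC.add_mem x hx y hy) hC.zero_mem h

lemma br_mem (hC : IsConfSubalgebra k V C) {c d : CSeq k V} (hc : c ∈ C) (hd : d ∈ C)
    (M : ℕ) : br k V c d M ∈ C := by
  obtain ⟨P, hP⟩ := exists_loc_bound k V c d (hC.isCEnd c hc) (hC.isCEnd d hd)
  have hPv : ∀ p, P ≤ p → cmG k V (fun i j => c i * d j) p = 0 := by
    intro p hp
    rw [← comul_eq_cmG]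
    exact hP p hp
  have hrep : br k V c d M = ∑ s ∈ Finset.range (P + 1),
      (((-1 : k) ^ (M + s)) * ((s.factorial : k))⁻¹)
        • ((cD k V)^[s] (cmG k V (fun i j => c i * d j) (M + s))) :=
    cmG_swap_eq_sum k V _ P hPv M
  rw [hrep]
  apply mem_finsum hC
  intro s _
  apply hC.smul_mem
  apply mem_cD_iter hC
  rw [← comul_eq_cmG]
  exact hC.comul_mem c hc d hd (M + s)

lemma rc_mem (hC : IsConfSubalgebra k V C) {c : CSeq k V} (hc : c ∈ C) {b : CSeq k V}
    (hbE : IsCEnd k V b) (hbA : ∀ i, b i ∈ setA k V C) (n : ℕ) :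
    comul k V n c b ∈ C := by
  obtain ⟨P, hP⟩ := exists_loc_bound k V c b (hC.isCEnd c hc) hbE
  have hPv : ∀ p, P ≤ p → cmG k V (fun i j => c i * b j) p = 0 := by
    intro p hp
    rw [← comul_eq_cmG]
    exact hP p hp
  have hbr0 : ∀ p, P ≤ p → cmG k V (fun i j => c j * b i) p = 0 :=
    cmG_swap_vanish k V (fun i j => c i * b j) P hPv
  have hrep : comul k V n c b = ∑ s ∈ Finset.range (P + 1),
      (((-1 : k) ^ (n + s)) * ((s.factorial : k))⁻¹)
        • ((cD k V)^[s] (cmG k V (fun i j => c j * b i) (n + s))) :=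
    cmG_swap_eq_sum k V (fun i j => c j * b i) P hbr0 n
  rw [hrep]
  apply mem_finsum hC
  intro s _
  apply hC.smul_mem
  apply mem_cD_iter hC
  show br k V c b (n + s) ∈ C
  obtain ⟨d, hd, M, hdM⟩ := hbA (n + s)
  rw [br_eq_of_coeff_eq k V c b d hbE.2 (hC.isCEnd d hd).2 (n + s) M hdM.symm]
  exact br_mem hC hc hd M

lemma key_mem (hC : IsConfSubalgebra k V C) {a b : CSeq k V}
    (haE : IsCEnd k V a) (haA : ∀ i, a i ∈ setA k V C)
    (hbE : IsCEnd k V b) (hbA : ∀ i, b i ∈ setA k V C) (n : ℕ) :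
    comul k V n a b ∈ C := by
  obtain ⟨c, hc, N, hcN⟩ := haA n
  rw [comul_eq_of_coeff_eq k V a c b haE.2 (hC.isCEnd c hc).2 n N hcN.symm]
  exact rc_mem hC hc hbE hbA N

end Glue

/-- `C` is a two-sided ideal of `C̃ = F(A(C))`, and moreover
`C̃ ∘_ω C̃ ⊆ C`. -/
theorem stmt2 (k : Type) [Field k] [IsAlgClosed k] [CharZero k]
    (V : Type) [AddCommGroup V] [Module k V] [Module (Polynomial k) V]
    [IsScalarTower k (Polynomial k) V] [Module.Finite (Polynomial k) V]
    (C : Set (CSeq k V)) (hC : IsConfSubalgebra k V C) :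
    C ⊆ setF k V (setA k V C) ∧
    omegaMulSet k V (setF k V (setA k V C)) C ⊆ C ∧
    omegaMulSet k V C (setF k V (setA k V C)) ⊆ C ∧
    omegaMulSet k V (setF k V (setA k V C)) (setF k V (setA k V C)) ⊆ C := by
  have hsub : C ⊆ setF k V (setA k V C) := by
    intro a ha
    exact ⟨hC.isCEnd a ha, fun n => ⟨a, ha, n, rfl⟩⟩
  have hprod : ∀ a ∈ setF k V (setA k V C), ∀ b ∈ setF k V (setA k V C), ∀ n : ℕ,
      comul k V n a b ∈ C := by
    intro a ha b hb n
    exact key_mem hC ha.1 ha.2 hb.1 hb.2 n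
  have hspan : ∀ A B : Set (CSeq k V), A ⊆ setF k V (setA k V C) →
      B ⊆ setF k V (setA k V C) → omegaMulSet k V A B ⊆ C := by
    intro A B hA hB
    let CM : Submodule k (CSeq k V) :=
      { carrier := C
        add_mem' := fun hx hy => hC.add_mem _ hx _ hy
        zero_mem' := hC.zero_mem
        smul_mem' := fun r _ hx => hC.smul_mem r _ hx }
    have hle : Submodule.span k
        {y | ∃ a ∈ A, ∃ b ∈ B, ∃ n : ℕ, y = comul k V n a b} ≤ CM := by
      rw [Submodule.span_le]
      rintro y ⟨a, hay, b, hby, n, rfl⟩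
      exact hprod a (hA hay) b (hB hby) n
    exact fun x hx => hle hx
  exact ⟨hsub, hspan _ _ (fun x hx => hx) hsub, hspan _ _ hsub (fun x hx => hx),
    hspan _ _ (fun x hx => hx) (fun x hx => hx)⟩
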